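/- Let S_1, ..., S_n be compact subsets of R^q, each of diameter at most d, and let x ∈ conv(S_1 + ... + S_n). Then there exist points y_i ∈ S_i for each i such that ||x − (y_1 + ... + y_n)|| ≤ sqrt(min{q, n}) · d. -/

import Mathlib

open scoped Pointwise
open Finset

lemma sf_descent {q n : ℕ} {K : Type} [Fintype K] [DecidableEq K]
    (p : Fin n → K → EuclideanSpace ℝ (Fin q)) :
    ∀ (N : ℕ) (w : Fin n → K → ℝ),
    (∑ i, (Finset.univ.filter fun k => w i k ≠ 0).card) ≤ N →
    (∀ i k, 0 ≤ w i k) → (∀ i, ∑ k, w i k = 1) →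
    ∃ w' : Fin n → K → ℝ, (∀ i k, 0 ≤ w' i k) ∧ (∀ i, ∑ k, w' i k = 1) ∧
      (∑ i, ∑ k, w' i k • p i k) = (∑ i, ∑ k, w i k • p i k) ∧
      (∑ i, (Finset.univ.filter fun k => w' i k ≠ 0).card) ≤ n + q := by
  intro N
  induction N with
  | zero =>
    intro w hN h0 h1
    exact ⟨w, h0, h1, rfl, le_trans hN (Nat.zero_le _)⟩
  | succ N ih =>
    intro w hN h0 h1
    by_cases hc : (∑ i, (Finset.univ.filter fun k => w i k ≠ 0).card) ≤ n + q
    · exact ⟨w, h0, h1, rfl, hc⟩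
    push_neg at hc
    set σ : Finset (Fin n × K) := Finset.univ.filter (fun s => w s.1 s.2 ≠ 0) with hσ
    have hσcard : σ.card = ∑ i, (Finset.univ.filter fun k => w i k ≠ 0).card := by
      rw [hσ, Finset.card_filter, Fintype.sum_prod_type]
      exact Finset.sum_congr rfl fun i _ => (Finset.card_filter _ _).symm
    have hnli : ¬ LinearIndependent ℝ (fun s : σ =>
        ((Pi.single s.1.1 (1:ℝ) : Fin n → ℝ), p s.1.1 s.1.2)) := by
      intro hli
      have h2 := hli.fintype_card_le_finrank
      rw [Fintype.card_coe] at h2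
      have hfr : Module.finrank ℝ ((Fin n → ℝ) × EuclideanSpace ℝ (Fin q)) = n + q := by
        simp [Module.finrank_prod]
      rw [hfr, hσcard] at h2
      omega
    obtain ⟨g, hg0, s₀, hs₀⟩ := Fintype.not_linearIndependent_iff.mp hnli
    set δ : Fin n → K → ℝ := fun i k => if h : (i,k) ∈ σ then g ⟨(i,k), h⟩ else 0 with hδ
    have hδσ : ∀ a : Fin n × K, a ∉ σ → δ a.1 a.2 = 0 := by
      intro a ha
      simp only [hδ]
      exact dif_neg ha
    have hδsupp : ∀ i k, w i k = 0 → δ i k = 0 := by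
      intro i k h
      exact hδσ (i, k) (by simp [hσ, h])
    have key : ∑ a : Fin n × K, (δ a.1 a.2) •
        ((Pi.single a.1 (1:ℝ) : Fin n → ℝ), p a.1 a.2) = 0 := by
      rw [← Finset.sum_subset (Finset.subset_univ σ)
        (fun a _ ha => by rw [hδσ a ha, zero_smul])]
      rw [← Finset.sum_coe_sort σ (fun a => (δ a.1 a.2) •
        ((Pi.single a.1 (1:ℝ) : Fin n → ℝ), p a.1 a.2))]
      rw [← hg0]
      exact Finset.sum_congr rfl fun s _ => by rw [show δ s.1.1 s.1.2 = g s from dif_pos s.2]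
    have key1 : ∀ i, ∑ k, δ i k = 0 := by
      intro i
      have h2 := congrFun (congrArg Prod.fst key) i
      simp only [Prod.fst_sum, Prod.smul_fst, Finset.sum_apply, Pi.smul_apply,
        Pi.single_apply, smul_eq_mul, mul_ite, mul_one, mul_zero, Prod.fst_zero,
        Pi.zero_apply, Fintype.sum_prod_type] at h2
      rw [← h2]
      rw [Finset.sum_comm]
      simp
    have key2 : ∑ a : Fin n × K, δ a.1 a.2 • p a.1 a.2 = 0 := by
      have h2 := congrArg Prod.snd key
      simpa only [Prod.snd_sum, Prod.smul_snd, Prod.snd_zero] using h2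
    have hneg : ∃ s : Fin n × K, δ s.1 s.2 < 0 := by
      by_contra h
      push_neg at h
      have h0' : ∀ a : Fin n × K, δ a.1 a.2 = 0 := by
        intro a
        have := (Finset.sum_eq_zero_iff_of_nonneg
          (fun k _ => h (a.1, k))).mp (key1 a.1) a.2 (Finset.mem_univ _)
        exact this
      have hgs : δ s₀.1.1 s₀.1.2 = g s₀ := dif_pos s₀.2
      exact hs₀ (by rw [← hgs, h0' s₀.1])
    obtain ⟨s₁, hs₁⟩ := hneg
    set T : Finset (Fin n × K) := Finset.univ.filter (fun s => δ s.1 s.2 < 0) with hT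
    have hTne : T.Nonempty := ⟨s₁, by simp [hT, hs₁]⟩
    set τ : ℝ := T.inf' hTne (fun s => w s.1 s.2 / (-(δ s.1 s.2))) with hτ
    have hτ0 : 0 ≤ τ := by
      apply Finset.le_inf'
      intro s hs
      have hsneg : δ s.1 s.2 < 0 := (Finset.mem_filter.mp hs).2
      exact div_nonneg (h0 _ _) (by linarith)
    obtain ⟨s₂, hs₂T, hs₂⟩ := Finset.exists_mem_eq_inf' hTne (fun s => w s.1 s.2 / (-(δ s.1 s.2)))
    have hδs₂ : δ s₂.1 s₂.2 < 0 := (Finset.mem_filter.mp hs₂T).2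
    have hws₂ : w s₂.1 s₂.2 ≠ 0 := fun h => hδs₂.ne (hδsupp _ _ h)
    set w' : Fin n → K → ℝ := fun i k => w i k + τ * δ i k with hw'
    have hw'0 : ∀ i k, 0 ≤ w' i k := by
      intro i k
      simp only [hw']
      rcases lt_or_ge (δ i k) 0 with hlt | hge
      · have hmem : (i,k) ∈ T := by simp [hT, hlt]
        have hle : τ ≤ w i k / (-(δ i k)) := by rw [hτ]; exact Finset.inf'_le _ hmem
        rw [le_div_iff₀ (by linarith)] at hle
        nlinarith
      · nlinarith [h0 i k, mul_nonneg hτ0 hge]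
    have hw'1 : ∀ i, ∑ k, w' i k = 1 := by
      intro i
      simp only [hw']
      rw [Finset.sum_add_distrib, h1 i, ← Finset.mul_sum, key1 i, mul_zero, add_zero]
    have hzero : w' s₂.1 s₂.2 = 0 := by
      simp only [hw']
      rw [hτ, hs₂]
      field_simp [hδs₂.ne]
      ring
    have hsupp : ∀ i k, w i k = 0 → w' i k = 0 := by
      intro i k h
      simp [hw', h, hδsupp i k h]
    have hpoint : (∑ i, ∑ k, w' i k • p i k) = ∑ i, ∑ k, w i k • p i k := by
      simp only [hw', add_smul, Finset.sum_add_distrib, mul_smul]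
      have : ∑ i, ∑ k, τ • δ i k • p i k = τ • ∑ a : Fin n × K, δ a.1 a.2 • p a.1 a.2 := by
        rw [Fintype.sum_prod_type, Finset.smul_sum]
        exact Finset.sum_congr rfl fun i _ => by rw [Finset.smul_sum]
      rw [this, key2, smul_zero, add_zero]
    have hmono : ∀ i, (Finset.univ.filter fun k => w' i k ≠ 0) ⊆
        (Finset.univ.filter fun k => w i k ≠ 0) := by
      intro i k hk
      simp only [Finset.mem_filter] at hk ⊢
      exact ⟨Finset.mem_univ k, fun h => hk.2 (hsupp i k h)⟩
    have hstrict : (Finset.univ.filter fun k => w' s₂.1 k ≠ 0).card <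
        (Finset.univ.filter fun k => w s₂.1 k ≠ 0).card := by
      apply Finset.card_lt_card
      refine ⟨hmono s₂.1, fun hsub => ?_⟩
      have h3 := hsub (Finset.mem_filter.mpr ⟨Finset.mem_univ _, hws₂⟩)
      exact (Finset.mem_filter.mp h3).2 hzero
    have hdec : (∑ i, (Finset.univ.filter fun k => w' i k ≠ 0).card) <
        ∑ i, (Finset.univ.filter fun k => w i k ≠ 0).card :=
      Finset.sum_lt_sum (fun i _ => Finset.card_le_card (hmono i))
        ⟨s₂.1, Finset.mem_univ _, hstrict⟩
    obtain ⟨w'', ha, hb, hcc, he⟩ := ih w' (by omega) hw'0 hw'1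
    exact ⟨w'', ha, hb, by rw [hcc, hpoint], he⟩

lemma sf_round {q n : ℕ} {K : Type} [Fintype K] [Nonempty K] (d : ℝ)
    (p : Fin n → K → EuclideanSpace ℝ (Fin q)) (w : Fin n → K → ℝ)
    (h0 : ∀ i k, 0 ≤ w i k) (h1 : ∀ i, ∑ k, w i k = 1)
    (hdist : ∀ i k, ‖(∑ l, w i l • p i l) - p i k‖ ≤ d)
    (B : Finset (Fin n)) :
    ∃ c : Fin n → K,
      ‖∑ i ∈ B, ((∑ l, w i l • p i l) - p i (c i))‖^2 ≤ (B.card : ℝ) * d^2 := by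
  classical
  induction B using Finset.cons_induction with
  | empty => exact ⟨fun _ => Classical.arbitrary K, by simp⟩
  | cons a B' ha ih =>
    obtain ⟨c', hc'⟩ := ih
    set x : Fin n → EuclideanSpace ℝ (Fin q) := fun i => ∑ l, w i l • p i l with hxdef
    set v : EuclideanSpace ℝ (Fin q) := ∑ i ∈ B', (x i - p i (c' i)) with hv
    have hd0 : 0 ≤ d := le_trans (norm_nonneg _) (hdist a (Classical.arbitrary K))
    have hzero : ∑ k, w a k • (x a - p a k) = (0 : EuclideanSpace ℝ (Fin q)) := by
      simp only [smul_sub]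
      rw [Finset.sum_sub_distrib, ← Finset.sum_smul, h1, one_smul]
      exact sub_self _
    have havg : ∑ k, w a k * ‖(x a - p a k) + v‖^2 ≤ d^2 + ‖v‖^2 := by
      have hexp : ∀ k, ‖(x a - p a k) + v‖^2
          = ‖x a - p a k‖^2 + 2 * (inner ℝ (x a - p a k) v : ℝ) + ‖v‖^2 :=
        fun k => norm_add_sq_real _ _
      calc ∑ k, w a k * ‖(x a - p a k) + v‖^2
          = (∑ k, w a k * ‖x a - p a k‖^2)
            + 2 * (inner ℝ (∑ k, w a k • (x a - p a k)) v : ℝ)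
            + (∑ k, w a k) * ‖v‖^2 := by
            have hterm : ∀ k, w a k * ‖(x a - p a k) + v‖^2
                = w a k * ‖x a - p a k‖^2 + 2 * (inner ℝ (w a k • (x a - p a k)) v : ℝ)
                  + w a k * ‖v‖^2 := by
              intro k
              rw [hexp k, real_inner_smul_left]
              ring
            rw [Finset.sum_congr rfl fun k _ => hterm k, Finset.sum_add_distrib,
              Finset.sum_add_distrib, ← Finset.mul_sum, ← sum_inner, ← Finset.sum_mul]
        _ ≤ d^2 + 2 * (inner ℝ (∑ k, w a k • (x a - p a k)) v : ℝ) + (∑ k, w a k) * ‖v‖^2 := by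
            have : ∑ k, w a k * ‖x a - p a k‖^2 ≤ ∑ k, w a k * d^2 := by
              refine Finset.sum_le_sum fun k _ => ?_
              exact mul_le_mul_of_nonneg_left
                (pow_le_pow_left₀ (norm_nonneg _) (hdist a k) 2) (h0 a k)
            rw [← Finset.sum_mul, h1, one_mul] at this
            linarith
        _ = d^2 + ‖v‖^2 := by
            rw [hzero, inner_zero_left, h1, one_mul]
            ring
    have hex : ∃ k, ‖(x a - p a k) + v‖^2 ≤ d^2 + ‖v‖^2 := by
      by_contra h
      push_neg at h
      have hwpos : ∃ k₀, 0 < w a k₀ := by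
        by_contra h'
        push_neg at h'
        have : ∑ k, w a k = 0 :=
          Finset.sum_eq_zero fun k _ => le_antisymm (h' k) (h0 a k)
        rw [h1] at this
        norm_num at this
      obtain ⟨k₀, hk₀⟩ := hwpos
      have hlt : ∑ k, w a k * (d^2 + ‖v‖^2) < ∑ k, w a k * ‖(x a - p a k) + v‖^2 := by
        apply Finset.sum_lt_sum
        · intro k _
          rcases eq_or_lt_of_le (h0 a k) with he | hlt'
          · rw [← he]; simp
          · exact le_of_lt (mul_lt_mul_of_pos_left (h k) hlt')
        · exact ⟨k₀, Finset.mem_univ _, mul_lt_mul_of_pos_left (h k₀) hk₀⟩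
      rw [← Finset.sum_mul, h1, one_mul] at hlt
      linarith
    obtain ⟨k, hk⟩ := hex
    refine ⟨Function.update c' a k, ?_⟩
    rw [Finset.sum_cons]
    have hrw : ∑ i ∈ B', (x i - p i (Function.update c' a k i)) = v :=
      Finset.sum_congr rfl fun i hi => by
        rw [Function.update_of_ne (ne_of_mem_of_not_mem hi ha)]
    rw [Function.update_self, hrw]
    calc ‖(x a - p a k) + v‖^2 ≤ d^2 + ‖v‖^2 := hk
      _ ≤ d^2 + (B'.card : ℝ) * d^2 := by linarith [hc']
      _ = ((Finset.cons a B' ha).card : ℝ) * d^2 := by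
          rw [Finset.card_cons]
          push_cast
          ring

/-- Quantitative Shapley-Folkman lemma. -/
theorem shapley_folkman_quantitative (q n : ℕ) (d : ℝ)
    (S : Fin n → Set (EuclideanSpace ℝ (Fin q)))
    (hS : ∀ i, IsCompact (S i)) (hd : ∀ i, Metric.diam (S i) ≤ d)
    (x : EuclideanSpace ℝ (Fin q)) (hx : x ∈ convexHull ℝ (∑ i, S i)) :
    ∃ y : Fin n → EuclideanSpace ℝ (Fin q), (∀ i, y i ∈ S i) ∧
      ‖x - ∑ i, y i‖ ≤ Real.sqrt (min (q : ℝ) (n : ℝ)) * d := by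
  classical
  rcases Nat.eq_zero_or_pos n with hn | hn
  · subst hn
    refine ⟨fun i => i.elim0, fun i => i.elim0, ?_⟩
    have hx0 : x = 0 := by
      simpa [Finset.univ_eq_empty, convexHull_singleton] using hx
    have hmin : min (q : ℝ) ((0:ℕ) : ℝ) = ((0:ℕ):ℝ) := min_eq_right (by simp)
    simp only [hx0]
    rw [hmin]
    simp
  have hd0 : 0 ≤ d := le_trans Metric.diam_nonneg (hd ⟨0, hn⟩)
  rw [_root_.convexHull_eq] at hx
  obtain ⟨ι, t, W, z, hW0, hW1, hz, hcm⟩ := hx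
  have htne : t.Nonempty := by
    rcases Finset.eq_empty_or_nonempty t with h | h
    · exfalso; rw [h, Finset.sum_empty] at hW1; norm_num at hW1
    · exact h
  haveI : Nonempty ↥t := htne.coe_sort
  -- split each z k into components
  have hzsplit : ∀ k : ↥t, ∃ gk : Fin n → EuclideanSpace ℝ (Fin q),
      (∀ i, gk i ∈ S i) ∧ ∑ i, gk i = z k := by
    intro k
    have hk := hz k k.2
    rw [Set.mem_fintype_sum] at hk
    obtain ⟨g, hg, hsum⟩ := hk
    exact ⟨g, hg, hsum⟩
  choose P hP hPsum using hzsplit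
  set p : Fin n → ↥t → EuclideanSpace ℝ (Fin q) := fun i k => P k i with hpdef
  set w0 : Fin n → ↥t → ℝ := fun _ k => W k with hw0def
  have hw00 : ∀ i k, 0 ≤ w0 i k := fun i k => hW0 k k.2
  have hw01 : ∀ i, ∑ k, w0 i k = 1 := fun i => by
    rw [hw0def, Finset.sum_coe_sort t W]
    exact hW1
  have hxsum : x = ∑ i, ∑ k, w0 i k • p i k := by
    rw [← hcm, Finset.centerMass_eq_of_sum_1 _ _ hW1]
    rw [Finset.sum_comm]
    rw [← Finset.sum_coe_sort t (fun k => W k • z k)]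
    refine Finset.sum_congr rfl fun k _ => ?_
    rw [← hPsum k, Finset.smul_sum]
  obtain ⟨w, hw0', hw1', hwpt, hwcard⟩ := sf_descent p
    (∑ i, (Finset.univ.filter fun k => w0 i k ≠ 0).card) w0 le_rfl hw00 hw01
  set X : Fin n → EuclideanSpace ℝ (Fin q) := fun i => ∑ k, w i k • p i k with hXdef
  have hXsum : ∑ i, X i = x := by rw [hXdef]; rw [hwpt, ← hxsum]
  have hXconv : ∀ i, X i ∈ convexHull ℝ (S i) := by
    intro i
    have hcm2 := Finset.centerMass_mem_convexHull (t := (Finset.univ : Finset ↥t))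
      (w := w i) (z := p i) (fun k _ => hw0' i k) (by rw [hw1' i]; norm_num)
      (fun k _ => hP k i)
    rwa [Finset.centerMass_eq_of_sum_1 _ _ (hw1' i)] at hcm2
  have hdist : ∀ i k, ‖X i - p i k‖ ≤ d := by
    intro i k
    rw [← dist_eq_norm]
    calc dist (X i) (p i k) ≤ Metric.diam (convexHull ℝ (S i)) :=
          Metric.dist_le_diam_of_mem (isBounded_convexHull.mpr (hS i).isBounded)
            (hXconv i) (subset_convexHull ℝ _ (hP k i))
      _ = Metric.diam (S i) := convexHull_diam _
      _ ≤ d := hd i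
  set supp : Fin n → Finset ↥t := fun i => Finset.univ.filter fun k => w i k ≠ 0 with hsuppdef
  have hsuppne : ∀ i, (supp i).Nonempty := by
    intro i
    rcases Finset.eq_empty_or_nonempty (supp i) with h | h
    · exfalso
      have hz0 : ∑ k, w i k = 0 := Finset.sum_eq_zero fun k _ => by
        by_contra hk
        exact (Finset.eq_empty_iff_forall_notMem.mp h k) (by simp [hsuppdef, hk])
      rw [hw1'] at hz0
      norm_num at hz0
    · exact h
  set B : Finset (Fin n) := Finset.univ.filter fun i => 2 ≤ (supp i).card with hBdef
  have hBq : B.card ≤ q := by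
    have hwcard2 : (∑ i, (supp i).card) ≤ n + q := hwcard
    have hkey : B.card + n ≤ ∑ i, (supp i).card := by
      have hterm : ∀ i : Fin n, (if 2 ≤ (supp i).card then 1 else 0) + 1 ≤ (supp i).card := by
        intro i
        by_cases h : 2 ≤ (supp i).card
        · simp only [if_pos h]; omega
        · simp only [if_neg h]; exact (hsuppne i).card_pos
      calc B.card + n = ∑ i : Fin n, ((if 2 ≤ (supp i).card then 1 else 0) + 1) := by
            rw [Finset.sum_add_distrib, hBdef, Finset.card_filter]
            simp
        _ ≤ ∑ i, (supp i).card := Finset.sum_le_sum fun i _ => hterm i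
    omega
  have hBn : B.card ≤ n := le_trans (Finset.card_filter_le _ _) (by simp)
  have hsingle : ∀ i, i ∉ B → ∃ k, X i = p i k := by
    intro i hi
    have hcard : (supp i).card = 1 := by
      have h2 : ¬ 2 ≤ (supp i).card := by simpa [hBdef] using hi
      have h1' : 1 ≤ (supp i).card := (hsuppne i).card_pos
      omega
    obtain ⟨k, hk⟩ := Finset.card_eq_one.mp hcard
    refine ⟨k, ?_⟩
    have hout : ∀ l, l ≠ k → w i l = 0 := by
      intro l hl
      by_contra h
      have : l ∈ supp i := by simp [hsuppdef, h]
      rw [hk, Finset.mem_singleton] at this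
      exact hl this
    have hwk : w i k = 1 := by
      have hsum : ∑ l, w i l = w i k := Fintype.sum_eq_single k hout
      rw [hw1'] at hsum
      exact hsum.symm
    rw [hXdef]
    simp only
    rw [Fintype.sum_eq_single k (fun l hl => by rw [hout l hl, zero_smul]), hwk, one_smul]
  obtain ⟨c, hc⟩ := sf_round d p w hw0' hw1' hdist B
  have hky : ∀ i : Fin n, ∃ k : ↥t, (i ∉ B → X i = p i k) := by
    intro i
    by_cases h : i ∈ B
    · exact ⟨Classical.arbitrary _, fun h' => absurd h h'⟩
    · obtain ⟨k, hk⟩ := hsingle i h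
      exact ⟨k, fun _ => hk⟩
  choose k0 hk0 using hky
  refine ⟨fun i => if i ∈ B then p i (c i) else p i (k0 i), fun i => ?_, ?_⟩
  · by_cases h : i ∈ B
    · simp only [if_pos h]; exact hP (c i) i
    · simp only [if_neg h]; exact hP (k0 i) i
  · have hsplit : x - (∑ i, if i ∈ B then p i (c i) else p i (k0 i))
        = ∑ i ∈ B, (X i - p i (c i)) := by
      rw [← hXsum, ← Finset.sum_sub_distrib]
      rw [← Finset.sum_subset (Finset.subset_univ B) (fun i _ hi => by
        rw [if_neg hi, hk0 i hi, sub_self])]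
      exact Finset.sum_congr rfl fun i hi => by rw [if_pos hi]
    rw [hsplit]
    have hsq : ‖∑ i ∈ B, (X i - p i (c i))‖^2 ≤ (min (q:ℝ) (n:ℝ)) * d^2 := by
      refine le_trans hc ?_
      apply mul_le_mul_of_nonneg_right _ (sq_nonneg d)
      refine le_min ?_ ?_
      · exact_mod_cast hBq
      · exact_mod_cast hBn
    calc ‖∑ i ∈ B, (X i - p i (c i))‖
        = Real.sqrt (‖∑ i ∈ B, (X i - p i (c i))‖^2) := (Real.sqrt_sq (norm_nonneg _)).symm
      _ ≤ Real.sqrt ((min (q:ℝ) (n:ℝ)) * d^2) := Real.sqrt_le_sqrt hsq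
      _ = Real.sqrt (min (q:ℝ) (n:ℝ)) * d := by
          rw [Real.sqrt_mul (le_min (by positivity) (by positivity)), Real.sqrt_sq hd0]
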